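/- Let k ≥ 3 be an integer and set α = k - 1 + √(k(k-2)) and β = k - 1 - √(k(k-2)). A positive integer N is simultaneously a k-gonal number and a centered k-gonal number (i.e., N = P(n;k) for some integer n ≥ 1 and N = C(m;k) for some integer m ≥ 1) if and only if there exists an integer i ≥ 0 such that (N : ℝ) = (k/(16(k-2))) · ((-2k² + 18k - 32)/k + α^(2i+1) + β^(2i+1)). -/

import Mathlib

/-- The `n`-th `k`-gonal number: `P(n;k) = ((k-2)n² + (4-k)n)/2` (the numerator is always even). -/
def polygonal (k n : ℤ) : ℤ := ((k - 2) * n ^ 2 + (4 - k) * n) / 2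

/-- The `m`-th centered `k`-gonal number: `C(m;k) = (km² - km + 2)/2` (the numerator is always even). -/
def centered (k m : ℤ) : ℤ := (k * m ^ 2 - k * m + 2) / 2

namespace PCAux

/-- the sequence of simultaneous solutions `(n_i, m_i)` -/
def pm (k : ℤ) : ℕ → ℤ × ℤ
  | 0 => (1, 1)
  | i+1 => ((k-1)*(pm k i).1 + k*(pm k i).2 - (k-2),
            (k-2)*(pm k i).1 + (k-1)*(pm k i).2 - (k-3))

lemma pm_pos (k : ℤ) (hk : 3 ≤ k) : ∀ i, 1 ≤ (pm k i).1 ∧ 1 ≤ (pm k i).2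
  | 0 => ⟨le_refl 1, le_refl 1⟩
  | (i+1) => by
      obtain ⟨h1, h2⟩ := pm_pos k hk i
      constructor <;> simp only [pm] <;> nlinarith

lemma pm_inv (k : ℤ) : ∀ i, (k-2)*(pm k i).1^2 + (4-k)*(pm k i).1
    = k*(pm k i).2^2 - k*(pm k i).2 + 2
  | 0 => by norm_num [pm]
  | (i+1) => by
      have h := pm_inv k i
      simp only [pm]
      linear_combination h

lemma pm_real (k : ℤ) (σ : ℝ) (hσ : σ^2 = (k:ℝ)*((k:ℝ)-2)) :
    ∀ i : ℕ, (2*((k:ℝ)-2)*((pm k i).1 : ℝ) - ((k:ℝ)-4)) + (2*((pm k i).2:ℝ) - 1)*σ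
      = ((k:ℝ) + σ) * (((k:ℝ) - 1) + σ)^i
  | 0 => by simp [pm]; ring
  | (i+1) => by
      have ih := pm_real k σ hσ i
      simp only [pm]
      push_cast
      linear_combination (((k:ℝ)-1)+σ) * ih - (2*((pm k i).2:ℝ)-1)*hσ

lemma formula_eq (k : ℤ) (hk : 3 ≤ k) (i : ℕ) :
    ((k : ℝ) / (16 * ((k : ℝ) - 2))) *
        ((-2 * (k : ℝ) ^ 2 + 18 * (k : ℝ) - 32) / (k : ℝ) +
          ((k : ℝ) - 1 + Real.sqrt ((k : ℝ) * ((k : ℝ) - 2))) ^ (2 * i + 1) +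
          ((k : ℝ) - 1 - Real.sqrt ((k : ℝ) * ((k : ℝ) - 2))) ^ (2 * i + 1))
      = (((k-2)*(pm k i).1^2 + (4-k)*(pm k i).1 : ℤ) : ℝ) / 2 := by
  have hk0 : (k:ℝ) ≠ 0 := by exact_mod_cast (by omega : k ≠ 0)
  have hk2 : (k:ℝ) - 2 ≠ 0 := by
    have : ((k:ℝ)) - 2 = ((k - 2 : ℤ) : ℝ) := by push_cast; ring
    rw [this]
    exact_mod_cast (by omega : k - 2 ≠ 0)
  set s : ℝ := Real.sqrt ((k : ℝ) * ((k : ℝ) - 2)) with hs_def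
  have hDnn : (0:ℝ) ≤ (k:ℝ)*((k:ℝ)-2) := by
    have h3 : (3:ℝ) ≤ (k:ℝ) := by exact_mod_cast hk
    nlinarith
  have hs : s^2 = (k:ℝ)*((k:ℝ)-2) := Real.sq_sqrt hDnn
  set nr : ℝ := ((pm k i).1 : ℝ) with hnr
  set mr : ℝ := ((pm k i).2 : ℝ) with hmr
  set X : ℝ := 2*((k:ℝ)-2)*nr - ((k:ℝ)-4) with hX
  set Y : ℝ := 2*mr - 1 with hY
  have h1 : X + Y*s = ((k:ℝ) + s) * (((k:ℝ) - 1) + s)^i := pm_real k s hs i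
  have h2 : X + Y*(-s) = ((k:ℝ) + (-s)) * (((k:ℝ) - 1) + (-s))^i :=
    pm_real k (-s) (by rw [neg_pow]; simpa using hs) i
  have hpow : ∀ t : ℝ, t^(2*i+1) = t*(t^i)^2 := by
    intro t; rw [pow_succ, pow_mul]; ring
  have e1 : (X + Y*s)^2 = 2*(k:ℝ)*(((k:ℝ) - 1) + s)^(2*i+1) := by
    rw [h1, hpow]
    linear_combination ((((k:ℝ)-1)+s)^i)^2 * hs
  have e2 : (X - Y*s)^2 = 2*(k:ℝ)*(((k:ℝ) - 1) - s)^(2*i+1) := by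
    have h2' : X - Y*s = ((k:ℝ) - s) * (((k:ℝ) - 1) - s)^i := by
      have : (((k:ℝ) - 1) + (-s))^i = (((k:ℝ) - 1) - s)^i := by ring
      rw [this] at h2
      linear_combination h2
    rw [h2', hpow]
    linear_combination ((((k:ℝ)-1)-s)^i)^2 * hs
  have hPell : X^2 - (k:ℝ)*((k:ℝ)-2)*Y^2 = 2*(k:ℝ) := by
    have h := pm_inv k i
    have hr : ((k:ℝ)-2)*nr^2 + (4-(k:ℝ))*nr = (k:ℝ)*mr^2 - (k:ℝ)*mr + 2 := by
      rw [hnr, hmr]; exact_mod_cast h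
    rw [hX, hY]
    linear_combination 4*((k:ℝ)-2)*hr
  have esum : ((k:ℝ) - 1 + s)^(2*i+1) + ((k:ℝ) - 1 - s)^(2*i+1)
      = (2*X^2 - 2*(k:ℝ))/(k:ℝ) := by
    rw [eq_div_iff hk0]
    have b1 : ((k:ℝ) - 1 + s) = (((k:ℝ) - 1) + s) := by ring
    have b2 : ((k:ℝ) - 1 - s) = (((k:ℝ) - 1) - s) := by ring
    rw [b1, b2]
    linear_combination (-(1/2))*e1 + (-(1/2))*e2 + Y^2*hs - hPell
  have hZ : (((k-2)*(pm k i).1^2 + (4-k)*(pm k i).1 : ℤ) : ℝ)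
      = ((k:ℝ)-2)*nr^2 + (4-(k:ℝ))*nr := by
    rw [hnr]; push_cast; ring
  rw [hZ]
  have key : (-2 * (k : ℝ) ^ 2 + 18 * (k : ℝ) - 32) / (k : ℝ) +
          ((k : ℝ) - 1 + s) ^ (2 * i + 1) +
          ((k : ℝ) - 1 - s) ^ (2 * i + 1)
      = ((-2 * (k : ℝ) ^ 2 + 18 * (k : ℝ) - 32) + (2*X^2 - 2*(k:ℝ)))/(k:ℝ) := by
    rw [add_assoc, esum, add_div]
  rw [key, hX]
  field_simp
  ring

lemma two_polygonal (k n : ℤ) : 2 * polygonal k n = (k - 2) * n ^ 2 + (4 - k) * n := by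
  unfold polygonal
  rw [Int.mul_ediv_cancel']
  have h : (k - 2) * n ^ 2 + (4 - k) * n = (k-2)*((n-1)*(n-1+1)) + 2*n := by ring
  rw [h]
  exact dvd_add (Dvd.dvd.mul_left (Int.even_mul_succ_self (n-1)).two_dvd _) ⟨n, rfl⟩

lemma two_centered (k m : ℤ) : 2 * centered k m = k * m ^ 2 - k * m + 2 := by
  unfold centered
  rw [Int.mul_ediv_cancel']
  have h : k * m ^ 2 - k * m + 2 = k*((m-1)*(m-1+1)) + 2*1 := by ring
  rw [h]
  exact dvd_add (Dvd.dvd.mul_left (Int.even_mul_succ_self (m-1)).two_dvd _) ⟨1, rfl⟩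

set_option maxHeartbeats 1000000 in
lemma descent (k : ℤ) (hk : 3 ≤ k) :
    ∀ M : ℕ, ∀ n m : ℤ, 1 ≤ n → 1 ≤ m → m ≤ (M:ℤ) →
      (k-2)*n^2 + (4-k)*n = k*m^2 - k*m + 2 → ∃ i, pm k i = (n, m) := by
  intro M
  induction M with
  | zero => intro n m hn hm hM _; exfalso; norm_num at hM; omega
  | succ M ih =>
    intro n m hn hm hM hQ
    rcases eq_or_lt_of_le hm with h1 | h2
    · -- m = 1, show n = 1
      have hm1 : m = 1 := h1.symm
      subst hm1
      have hn1 : n = 1 := by nlinarith [sq_nonneg (n-1)]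
      exact ⟨0, by rw [hn1]; rfl⟩
    · have hm2 : 2 ≤ m := h2
      -- the descended solution
      obtain ⟨n0, hn0def⟩ : ∃ a : ℤ, a = (k-1)*n - k*m + 2 := ⟨_, rfl⟩
      obtain ⟨m0, hm0def⟩ : ∃ a : ℤ, a = (k-1)*m - (k-2)*n - 1 := ⟨_, rfl⟩
      have hQ0 : (k-2)*n0^2 + (4-k)*n0 = k*m0^2 - k*m0 + 2 := by
        rw [hn0def, hm0def]; linear_combination hQ
      -- Pell coordinates
      obtain ⟨x, hxdef⟩ : ∃ a : ℤ, a = 2*(k-2)*n - (k-4) := ⟨_, rfl⟩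
      obtain ⟨y, hydef⟩ : ∃ a : ℤ, a = 2*m - 1 := ⟨_, rfl⟩
      have hPell : x^2 - k*(k-2)*y^2 = 2*k := by
        rw [hxdef, hydef]; linear_combination 4*(k-2)*hQ
      have hxpos : k ≤ x := by
        rw [hxdef]
        nlinarith [mul_le_mul_of_nonneg_left hn (show (0:ℤ) ≤ k-2 by linarith)]
      have hy3 : 3 ≤ y := by rw [hydef]; omega
      -- x0 = (k-1)x - k(k-2)y > 0
      have hx0 : 2*(k-2)*n0 - (k-4) = (k-1)*x - k*(k-2)*y := by
        rw [hn0def, hxdef, hydef]; ring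
      have hx0pos : 1 ≤ (k-1)*x - k*(k-2)*y := by
        rcases le_or_gt ((k-1)*x) (k*(k-2)*y) with h | h
        · exfalso
          have hxp : 0 < x := by linarith
          have hyp : 0 < y := by linarith
          have ha : 0 ≤ (k-1)*x := mul_nonneg (by linarith) (by linarith)
          have hsq : ((k-1)*x)^2 ≤ (k*(k-2)*y)^2 := pow_le_pow_left₀ ha h 2
          have hPell2 : (k*(k-2))^2*y^2 = k*(k-2)*x^2 - 2*k^2*(k-2) := by
            linear_combination (-(k*(k-2)))*hPell
          have hkp : (0:ℤ) < k^2*(k-2) := by nlinarith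
          nlinarith [hsq, hPell2, sq_nonneg x, hkp]
        · linarith
      -- n0 ≥ 1
      have hn0 : 1 ≤ n0 := by
        by_contra hcon
        push_neg at hcon
        have hn0le : n0 ≤ 0 := by omega
        have hxb : (k-1)*x - k*(k-2)*y ≤ 4 - k := by
          rw [← hx0]
          nlinarith [mul_nonpos_of_nonneg_of_nonpos (show (0:ℤ) ≤ k-2 by linarith) hn0le]
        have hkle : k ≤ 3 := by linarith
        have hk3 : k = 3 := by omega
        have hn00 : n0 = 0 := by
          rw [← hx0] at hx0pos hxb
          subst hk3
          omega
        have hPell0 : (2*(k-2)*n0 - (k-4))^2 - k*(k-2)*(2*m0-1)^2 = 2*k := by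
          linear_combination 4*(k-2)*hQ0
        rw [hn00, hk3] at hPell0
        nlinarith [sq_nonneg (2*m0-1)]
      -- m0 ≥ 1
      have hm0 : 1 ≤ m0 := by
        by_contra hcon
        push_neg at hcon
        have hy0eq : (k-1)*y - x = 2*m0 - 1 := by
          rw [hm0def, hxdef, hydef]; ring
        have hxge : (k-1)*y + 1 ≤ x := by linarith
        have hyp1 : (0:ℤ) < (k-1)*y + 1 := by nlinarith
        have hsq : ((k-1)*y + 1)^2 ≤ x^2 := pow_le_pow_left₀ (by linarith) hxge 2
        nlinarith [hsq, hPell, sq_nonneg (y-3),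
          mul_nonneg (show (0:ℤ) ≤ k-1 by linarith) (show (0:ℤ) ≤ y-3 by linarith)]
      -- m ≤ n, hence m0 < m
      have hnm : m ≤ n := by
        have hxy : (k-2)*y < x := by
          by_contra hcon
          push_neg at hcon
          have h1 : (0:ℤ) ≤ x := by linarith
          have h2 : x^2 ≤ ((k-2)*y)^2 := pow_le_pow_left₀ h1 hcon 2
          nlinarith [hPell, mul_pos (mul_pos (show (0:ℤ) < k-2 by linarith)
            (show (0:ℤ) < k by linarith)) (mul_pos (show (0:ℤ) < y by linarith)
            (show (0:ℤ) < y by linarith))]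
        rw [hxdef, hydef] at hxy
        by_contra hcon
        push_neg at hcon
        nlinarith [mul_le_mul_of_nonneg_left (show n ≤ m - 1 by omega)
          (show (0:ℤ) ≤ k - 2 by linarith)]
      have hm0lt : m0 < m := by
        have h3 := mul_le_mul_of_nonneg_left hnm (show (0:ℤ) ≤ k - 2 by linarith)
        linarith [hm0def, h3]
      obtain ⟨i, hi⟩ := ih n0 m0 hn0 hm0 (by omega) hQ0
      refine ⟨i + 1, ?_⟩
      simp only [pm, hi, Prod.mk.injEq]
      constructor <;> rw [hn0def, hm0def] <;> ring

end PCAux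

theorem polygonal_and_centered_iff (k : ℤ) (hk : 3 ≤ k) (N : ℤ) (hN : 0 < N) :
    ((∃ n : ℤ, 1 ≤ n ∧ N = polygonal k n) ∧ (∃ m : ℤ, 1 ≤ m ∧ N = centered k m)) ↔
      (∃ i : ℕ, (N : ℝ) =
        ((k : ℝ) / (16 * ((k : ℝ) - 2))) *
          ((-2 * (k : ℝ) ^ 2 + 18 * (k : ℝ) - 32) / (k : ℝ) +
            ((k : ℝ) - 1 + Real.sqrt ((k : ℝ) * ((k : ℝ) - 2))) ^ (2 * i + 1) +
            ((k : ℝ) - 1 - Real.sqrt ((k : ℝ) * ((k : ℝ) - 2))) ^ (2 * i + 1))) := by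
  constructor
  · rintro ⟨⟨n, hn, hp⟩, ⟨m, hm, hc⟩⟩
    have h2p : 2 * N = (k - 2) * n ^ 2 + (4 - k) * n := by
      rw [hp]; exact PCAux.two_polygonal k n
    have h2c : 2 * N = k * m ^ 2 - k * m + 2 := by
      rw [hc]; exact PCAux.two_centered k m
    have hQ : (k-2)*n^2 + (4-k)*n = k*m^2 - k*m + 2 := by omega
    obtain ⟨i, hi⟩ := PCAux.descent k hk m.toNat n m hn hm
      (by rw [Int.toNat_of_nonneg (by omega)]) hQ
    refine ⟨i, ?_⟩
    rw [PCAux.formula_eq k hk i, hi]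
    have h2pr : 2*(N:ℝ) = ((k:ℝ)-2)*(n:ℝ)^2 + (4-(k:ℝ))*(n:ℝ) := by
      exact_mod_cast congrArg (fun z : ℤ => (z : ℝ)) h2p
    push_cast
    linarith
  · rintro ⟨i, hi⟩
    rw [PCAux.formula_eq k hk i] at hi
    obtain ⟨hn1, hm1⟩ := PCAux.pm_pos k hk i
    set n : ℤ := (PCAux.pm k i).1 with hndef
    set m : ℤ := (PCAux.pm k i).2 with hmdef
    have h2N : 2 * N = (k-2)*n^2 + (4-k)*n := by
      have : ((2 * N : ℤ) : ℝ) = (((k-2)*n^2 + (4-k)*n : ℤ) : ℝ) := by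
        push_cast
        push_cast at hi
        linarith
      exact_mod_cast this
    have hQ := PCAux.pm_inv k i
    rw [← hndef, ← hmdef] at hQ
    constructor
    · exact ⟨n, hn1, by have := PCAux.two_polygonal k n; omega⟩
    · exact ⟨m, hm1, by have := PCAux.two_centered k m; omega⟩
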